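/- For all integers k ≥ 2, l ≥ 1 and every integer s, conjugating the element ẽ⁽ˡ⁾ₖ * τₖ ∈ ℚ[Sₖ] by τₖˢ leaves it fixed: τₖˢ · (Σ_{σ∈Sₖ} aₖ^{l, des(σ)+1}·στₖσ⁻¹) · τₖ⁻ˢ = Σ_{σ∈Sₖ} aₖ^{l, des(σ)+1}·στₖσ⁻¹. -/

import Mathlib

noncomputable section

/-- Number of descents of a permutation of `Fin n`. -/
def descents {n : ℕ} (σ : Equiv.Perm (Fin n)) : ℕ :=
  (Finset.univ.filter fun p : Fin n × Fin n =>
    (p.2 : ℕ) = (p.1 : ℕ) + 1 ∧ σ p.2 < σ p.1).card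

/-- `aCoeff n l j` is the coefficient of `X^l` in `(1/n!) ∏_{i=1}^n (X - j + i) ∈ ℚ[X]`. -/
def aCoeff (n l j : ℕ) : ℚ :=
  (((n.factorial : ℚ))⁻¹ • ∏ i ∈ Finset.Icc 1 n,
    (Polynomial.X + Polynomial.C ((i : ℚ) - (j : ℚ)))).coeff l

/-- The `k`-cycle `τₖ` sending `1 ↦ k` and `i ↦ i-1` for `2 ≤ i ≤ k`. -/
def tau (k : ℕ) : Equiv.Perm (Fin k) := (finRotate k)⁻¹

open Finset Equiv
open Fin.NatCast Fin.CommRing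

namespace TC
variable {n : ℕ}

lemma neg_one_val : ((-1 : Fin (n+2)) : ℕ) = n + 1 := by
  rw [Fin.coe_neg_one]

lemma tau_apply (x : Fin (n+2)) : tau (n+2) x = x - 1 := by
  apply (finRotate (n+2)).injective
  rw [show finRotate (n+2) (tau (n+2) x) = x from Equiv.apply_symm_apply _ x,
    finRotate_succ_apply, sub_add_cancel]

lemma tau_pow_apply (m : ℕ) (x : Fin (n+2)) : (tau (n+2) ^ m) x = x - m := by
  induction m generalizing x with
  | zero => simp
  | succ m ih =>
    rw [pow_succ, Equiv.Perm.mul_apply, tau_apply, ih]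
    push_cast
    ring

lemma add_one_val {x : Fin (n+2)} (hx : x ≠ -1) : ((x + 1 : Fin (n+2)) : ℕ) = (x : ℕ) + 1 := by
  apply Fin.val_add_one_of_lt
  have : x.val ≠ n + 1 := fun h => hx (Fin.ext (by rw [h, neg_one_val]))
  exact Fin.lt_def.2 (by simpa [Fin.last] using lt_of_le_of_ne (Nat.lt_succ_iff.mp x.isLt) this)

lemma sub_one_lt_iff {x y : Fin (n+2)} (hx : x ≠ 0) (hy : y ≠ 0) :
    x - 1 < y - 1 ↔ x < y := by
  rw [Fin.lt_def, Fin.lt_def, Fin.coe_sub_one, Fin.coe_sub_one, if_neg hx, if_neg hy]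
  have hx1 : 1 ≤ x.val := Nat.one_le_iff_ne_zero.2 (fun h => hx (Fin.ext h))
  have hy1 : 1 ≤ y.val := Nat.one_le_iff_ne_zero.2 (fun h => hy (Fin.ext h))
  omega

end TC

namespace TC
variable {n : ℕ}

def Dset (σ : Equiv.Perm (Fin (n+2))) : Finset (Fin (n+2)) :=
  Finset.univ.filter fun i => σ (i+1) < σ i

lemma descents_mul_tau_pow (σ : Equiv.Perm (Fin (n+2))) (m : ℕ) :
    descents (σ * tau (n+2) ^ m) = ((Dset σ).erase (-1 - (m : Fin (n+2)))).card := by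
  unfold descents
  apply Finset.card_nbij' (i := fun p => p.1 - (m : Fin (n+2)))
    (j := fun j => (j + (m : Fin (n+2)), j + (m : Fin (n+2)) + 1))
  · rintro ⟨p1, p2⟩ hp
    rw [Finset.mem_coe, Finset.mem_filter] at hp
    simp only [Finset.mem_filter, Finset.mem_univ, true_and, Equiv.Perm.mul_apply] at hp
    obtain ⟨hval, hlt⟩ := hp
    have hp1 : p1 ≠ -1 := by
      intro h
      rw [h, neg_one_val] at hval
      omega
    have hp2 : p2 = p1 + 1 := by
      apply Fin.ext
      rw [hval, add_one_val hp1]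
    rw [Finset.mem_coe, Finset.mem_erase]
    constructor
    · intro h
      apply hp1
      linear_combination h
    · simp only [Dset, Finset.mem_filter, Finset.mem_univ, true_and]
      have h1 : p1 - (m : Fin (n+2)) + 1 = p2 - (m : Fin (n+2)) := by
        rw [hp2]; ring
      rw [h1]
      rwa [tau_pow_apply, tau_pow_apply] at hlt
  · rintro j hj
    rw [Finset.mem_coe, Finset.mem_erase] at hj
    obtain ⟨hjne, hjD⟩ := hj
    simp only [Dset, Finset.mem_filter, Finset.mem_univ, true_and] at hjD
    have hne : j + (m : Fin (n+2)) ≠ -1 := by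
      intro h
      apply hjne
      have : j = -1 - (m : Fin (n+2)) := by rw [← h]; ring
      exact this
    rw [Finset.mem_coe, Finset.mem_filter]
    simp only [Finset.mem_filter, Finset.mem_univ, true_and, Equiv.Perm.mul_apply]
    refine ⟨add_one_val hne, ?_⟩
    rw [tau_pow_apply, tau_pow_apply]
    have e1 : j + (m : Fin (n+2)) + 1 - (m : Fin (n+2)) = j + 1 := by ring
    have e2 : j + (m : Fin (n+2)) - (m : Fin (n+2)) = j := by ring
    rw [e1, e2]
    exact hjD
  · rintro ⟨p1, p2⟩ hp
    rw [Finset.mem_coe, Finset.mem_filter] at hp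
    simp only [Finset.mem_filter, Finset.mem_univ, true_and, Equiv.Perm.mul_apply] at hp
    have hp1 : p1 ≠ -1 := by
      intro h
      rw [h, neg_one_val] at hp
      omega
    have hp2 : p2 = p1 + 1 := by
      apply Fin.ext
      rw [hp.1, add_one_val hp1]
    rw [hp2]
    simp only [Prod.mk.injEq]
    constructor <;> ring
  · rintro j hj
    ring
end TC

namespace TC
variable {n : ℕ}

lemma neg_one_eq_last : (-1 : Fin (n+2)) = Fin.last (n+1) := by
  apply Fin.ext; rw [neg_one_val]; rfl

lemma card_Dset_tau_mul (σ : Equiv.Perm (Fin (n+2))) :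
    (Dset (tau (n+2) * σ)).card = (Dset σ).card := by
  set z : Fin (n+2) := σ⁻¹ 0 with hz
  have hzfix : σ z = 0 := Equiv.apply_symm_apply σ 0
  have hinv : ∀ x : Fin (n+2), σ x = 0 → x = z := by
    intro x h
    rw [hz, ← h]
    simp
  have hone : (1 : Fin (n+2)) ≠ 0 := by
    intro h
    have := congrArg Fin.val h
    simp at this
  have hpz : z - 1 ≠ z := by
    intro h
    apply hone
    linear_combination -h
  have hDeq : Dset (tau (n+2) * σ) = insert z ((Dset σ).erase (z - 1)) := by
    ext i
    simp only [Dset, Finset.mem_filter, Finset.mem_univ, true_and, Finset.mem_insert,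
      Finset.mem_erase, Equiv.Perm.mul_apply, tau_apply]
    by_cases hiz : i = z
    · rw [hiz]
      simp only [hzfix, zero_sub, eq_self_iff_true, true_or, iff_true]
      have hne : σ (z + 1) ≠ 0 := by
        intro h
        have h2 := hinv _ h
        apply hone
        linear_combination h2
      refine lt_of_le_of_ne ?_ ?_
      · rw [neg_one_eq_last]; exact Fin.le_last _
      · intro h
        apply hne
        linear_combination h
    · by_cases hip : i = z - 1
      · rw [hip]
        have h1 : z - 1 + 1 = z := by ring
        rw [h1, hzfix, zero_sub]
        constructor
        · intro h
          exact absurd h (by rw [neg_one_eq_last]; exact not_lt.2 (Fin.le_last _))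
        · rintro (h | ⟨h, -⟩)
          · exact absurd h hpz
          · exact absurd rfl h
      · have hσi : σ i ≠ 0 := fun h => hiz (hinv _ h)
        have hσi1 : σ (i + 1) ≠ 0 := by
          intro h
          apply hip
          have h2 := hinv _ h
          linear_combination h2
        rw [sub_one_lt_iff hσi1 hσi]
        simp [hiz, hip]
  rw [hDeq]
  have hzD : z ∉ (Dset σ).erase (z - 1) := by
    simp only [Dset, Finset.mem_erase, Finset.mem_filter, Finset.mem_univ, true_and, not_and]
    intro _
    rw [hzfix]
    exact fun h => absurd h (by simp [Fin.not_lt_zero])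
  have hpD : z - 1 ∈ Dset σ := by
    simp only [Dset, Finset.mem_filter, Finset.mem_univ, true_and]
    have h1 : z - 1 + 1 = z := by ring
    rw [h1, hzfix]
    have : σ (z - 1) ≠ 0 := fun h => hpz (hinv _ h)
    exact Fin.pos_of_ne_zero this
  rw [Finset.card_insert_of_notMem hzD, Finset.card_erase_of_mem hpD]
  have : 1 ≤ (Dset σ).card := Finset.card_pos.2 ⟨_, hpD⟩
  omega
end TC

namespace TC
variable {n : ℕ} (l : ℕ)

def Tsum (σ : Equiv.Perm (Fin (n+2))) : ℚ :=
  ∑ m : Fin (n+2), aCoeff (n+2) l (descents (σ * tau (n+2) ^ (m : ℕ)) + 1)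

lemma Tsum_eq (σ : Equiv.Perm (Fin (n+2))) :
    Tsum l σ = ∑ j : Fin (n+2), aCoeff (n+2) l (((Dset σ).erase j).card + 1) := by
  unfold Tsum
  apply Fintype.sum_equiv (Equiv.subLeft (-1 : Fin (n+2)))
  intro m
  rw [descents_mul_tau_pow, Fin.cast_val_eq_self]
  rfl

lemma Tsum_card_eq (σ σ' : Equiv.Perm (Fin (n+2))) (h : (Dset σ).card = (Dset σ').card) :
    Tsum l σ = Tsum l σ' := by
  have key : ∀ ρ : Equiv.Perm (Fin (n+2)), Tsum l ρ =
      ((Dset ρ).card) • aCoeff (n+2) l ((Dset ρ).card) +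
      ((n+2) - (Dset ρ).card) • aCoeff (n+2) l ((Dset ρ).card + 1) := by
    intro ρ
    rw [Tsum_eq]
    have step : ∀ j : Fin (n+2), aCoeff (n+2) l (((Dset ρ).erase j).card + 1) =
        if j ∈ Dset ρ then aCoeff (n+2) l ((Dset ρ).card)
        else aCoeff (n+2) l ((Dset ρ).card + 1) := by
      intro j
      by_cases hj : j ∈ Dset ρ
      · rw [if_pos hj, Finset.card_erase_of_mem hj]
        congr 1
        have : 1 ≤ (Dset ρ).card := Finset.card_pos.2 ⟨_, hj⟩
        omega
      · rw [if_neg hj, Finset.erase_eq_of_notMem hj]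
    rw [Finset.sum_congr rfl fun j _ => step j, Finset.sum_ite, Finset.sum_const,
      Finset.sum_const]
    congr 2
    · rw [Finset.filter_univ_mem]
    · have : Finset.filter (fun x => x ∉ Dset ρ) Finset.univ = (Dset ρ)ᶜ := by
        ext x; simp
      rw [this, Finset.card_compl, Fintype.card_fin]
  rw [key σ, key σ', h]

end TC

namespace TC
variable {n : ℕ} (l : ℕ)

abbrev G (n : ℕ) := Equiv.Perm (Fin (n+2))
abbrev A (n : ℕ) := MonoidAlgebra ℚ (G n)

lemma Tsum_tau_inv (σ : G n) : Tsum l ((tau (n+2))⁻¹ * σ) = Tsum l σ := by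
  apply Tsum_card_eq
  have := card_Dset_tau_mul ((tau (n+2))⁻¹ * σ)
  rw [show tau (n+2) * ((tau (n+2))⁻¹ * σ) = σ by group] at this
  exact this.symm

/-- reindexing by right multiplication with a power of tau. -/
lemma E_reindex (c : G n → ℚ) (m : ℕ) :
    ∑ σ : G n, MonoidAlgebra.single (σ * tau (n+2) * σ⁻¹) (c σ) =
    ∑ σ : G n, MonoidAlgebra.single (σ * tau (n+2) * σ⁻¹) (c (σ * tau (n+2) ^ m)) := by
  apply Fintype.sum_equiv (Equiv.mulRight ((tau (n+2) ^ m)⁻¹))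
  intro σ
  show MonoidAlgebra.single (σ * tau (n+2) * σ⁻¹) (c σ) =
    MonoidAlgebra.single ((σ * (tau (n+2) ^ m)⁻¹) * tau (n+2) * (σ * (tau (n+2) ^ m)⁻¹)⁻¹)
      (c ((σ * (tau (n+2) ^ m)⁻¹) * tau (n+2) ^ m))
  rw [inv_mul_cancel_right]
  congr 1
  group

lemma E_coeff_eq (c₁ c₂ : G n → ℚ)
    (h : ∀ σ : G n, (∑ m : Fin (n+2), c₁ (σ * tau (n+2) ^ (m : ℕ)))
        = ∑ m : Fin (n+2), c₂ (σ * tau (n+2) ^ (m : ℕ))) :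
    ∑ σ : G n, MonoidAlgebra.single (σ * tau (n+2) * σ⁻¹) (c₁ σ) =
    ∑ σ : G n, MonoidAlgebra.single (σ * tau (n+2) * σ⁻¹) (c₂ σ) := by
  have key : ∀ c : G n → ℚ,
      (n+2) • (∑ σ : G n, MonoidAlgebra.single (σ * tau (n+2) * σ⁻¹) (c σ) : A n) =
      ∑ σ : G n, MonoidAlgebra.single (σ * tau (n+2) * σ⁻¹)
        (∑ m : Fin (n+2), c (σ * tau (n+2) ^ (m : ℕ))) := by
    intro c
    have h1 : (n+2) • (∑ σ : G n, MonoidAlgebra.single (σ * tau (n+2) * σ⁻¹) (c σ) : A n)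
        = ∑ m : Fin (n+2), ∑ σ : G n,
            MonoidAlgebra.single (σ * tau (n+2) * σ⁻¹) (c (σ * tau (n+2) ^ (m : ℕ))) := by
      rw [Finset.sum_congr rfl fun (m : Fin (n+2)) _ => (E_reindex c (m : ℕ)).symm,
        Finset.sum_const, Finset.card_univ, Fintype.card_fin]
    rw [h1, Finset.sum_comm]
    apply Finset.sum_congr rfl
    intro σ _
    exact (map_sum (MonoidAlgebra.singleAddHom (σ * tau (n+2) * σ⁻¹)) _ _).symm
  have h3 : ∑ σ : G n, MonoidAlgebra.single (σ * tau (n+2) * σ⁻¹)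
        (∑ m : Fin (n+2), c₁ (σ * tau (n+2) ^ (m : ℕ))) =
      (∑ σ : G n, MonoidAlgebra.single (σ * tau (n+2) * σ⁻¹)
        (∑ m : Fin (n+2), c₂ (σ * tau (n+2) ^ (m : ℕ))) : A n) :=
    Finset.sum_congr rfl fun σ _ => by rw [h σ]
  have h2 : (n+2) • (∑ σ : G n, MonoidAlgebra.single (σ * tau (n+2) * σ⁻¹) (c₁ σ) : A n)
      = (n+2) • (∑ σ : G n, MonoidAlgebra.single (σ * tau (n+2) * σ⁻¹) (c₂ σ) : A n) := by
    rw [key c₁, key c₂]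
    exact h3
  have hne : ((n+2 : ℕ) : ℚ) ≠ 0 := by positivity
  apply smul_right_injective (A n) hne
  simp only [Nat.cast_smul_eq_nsmul]
  exact h2

end TC

namespace TC
variable {n : ℕ}

lemma conj_tau (l : ℕ) :
    MonoidAlgebra.single (tau (n+2)) (1:ℚ) *
      (∑ σ : G n, MonoidAlgebra.single (σ * tau (n+2) * σ⁻¹) (aCoeff (n+2) l (descents σ + 1))) *
      MonoidAlgebra.single (tau (n+2))⁻¹ (1:ℚ) =
    ∑ σ : G n, MonoidAlgebra.single (σ * tau (n+2) * σ⁻¹) (aCoeff (n+2) l (descents σ + 1)) := by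
  have expand : MonoidAlgebra.single (tau (n+2)) (1:ℚ) *
      (∑ σ : G n, MonoidAlgebra.single (σ * tau (n+2) * σ⁻¹) (aCoeff (n+2) l (descents σ + 1))) *
      MonoidAlgebra.single (tau (n+2))⁻¹ (1:ℚ) =
      ∑ σ : G n, MonoidAlgebra.single (tau (n+2) * (σ * tau (n+2) * σ⁻¹) * (tau (n+2))⁻¹)
        (aCoeff (n+2) l (descents σ + 1)) := by
    rw [Finset.mul_sum, Finset.sum_mul]
    apply Finset.sum_congr rfl
    intro σ _
    rw [MonoidAlgebra.single_mul_single, MonoidAlgebra.single_mul_single, one_mul, mul_one]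
  rw [expand]
  have reidx : ∑ σ : G n, MonoidAlgebra.single (tau (n+2) * (σ * tau (n+2) * σ⁻¹) * (tau (n+2))⁻¹)
        (aCoeff (n+2) l (descents σ + 1)) =
      ∑ σ : G n, MonoidAlgebra.single (σ * tau (n+2) * σ⁻¹)
        (aCoeff (n+2) l (descents ((tau (n+2))⁻¹ * σ) + 1)) := by
    apply Fintype.sum_equiv (Equiv.mulLeft (tau (n+2)))
    intro σ
    show MonoidAlgebra.single (tau (n+2) * (σ * tau (n+2) * σ⁻¹) * (tau (n+2))⁻¹)
        (aCoeff (n+2) l (descents σ + 1)) =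
      MonoidAlgebra.single ((tau (n+2) * σ) * tau (n+2) * (tau (n+2) * σ)⁻¹)
        (aCoeff (n+2) l (descents ((tau (n+2))⁻¹ * (tau (n+2) * σ)) + 1))
    rw [inv_mul_cancel_left]
    rw [show tau (n+2) * σ * tau (n+2) * (tau (n+2) * σ)⁻¹ =
      tau (n+2) * (σ * tau (n+2) * σ⁻¹) * (tau (n+2))⁻¹ by group]
  rw [reidx]
  apply E_coeff_eq
  intro σ
  have h1 : ∀ m : Fin (n+2), (tau (n+2))⁻¹ * (σ * tau (n+2) ^ (m:ℕ))
      = ((tau (n+2))⁻¹ * σ) * tau (n+2) ^ (m:ℕ) := fun m => by group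
  calc ∑ m : Fin (n+2), aCoeff (n+2) l (descents ((tau (n+2))⁻¹ * (σ * tau (n+2) ^ (m:ℕ))) + 1)
      = Tsum l ((tau (n+2))⁻¹ * σ) := by
        unfold Tsum
        exact Finset.sum_congr rfl fun m _ => by rw [h1 m]
    _ = Tsum l σ := Tsum_tau_inv l σ
    _ = _ := rfl

lemma main (l : ℕ) (s : ℤ) :
    MonoidAlgebra.single (tau (n+2) ^ s) (1 : ℚ) *
        (∑ σ : G n,
          MonoidAlgebra.single (σ * tau (n+2) * σ⁻¹) (aCoeff (n+2) l (descents σ + 1))) *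
        MonoidAlgebra.single (tau (n+2) ^ (-s)) (1 : ℚ) =
      ∑ σ : G n,
        MonoidAlgebra.single (σ * tau (n+2) * σ⁻¹) (aCoeff (n+2) l (descents σ + 1)) := by
  set E : A n := ∑ σ : G n,
    MonoidAlgebra.single (σ * tau (n+2) * σ⁻¹) (aCoeff (n+2) l (descents σ + 1)) with hE
  have hconj := conj_tau (n := n) l
  rw [← hE] at hconj
  have hcomm : Commute E (MonoidAlgebra.single (tau (n+2)) (1:ℚ)) := by
    show E * _ = _ * E
    have h2 := congrArg (fun y => y * MonoidAlgebra.single (tau (n+2)) (1:ℚ)) hconj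
    rw [mul_assoc (MonoidAlgebra.single (tau (n+2)) (1:ℚ) * E), MonoidAlgebra.single_mul_single,
      inv_mul_cancel, one_mul] at h2
    rw [show MonoidAlgebra.single (1 : G n) (1:ℚ) = (1 : A n) from rfl, mul_one] at h2
    exact h2.symm
  set φ : G n →* (A n)ˣ := (Units.map (MonoidAlgebra.of ℚ (G n))).comp toUnits.toMonoidHom with hφ
  have hval : ∀ g : G n, ((φ g : (A n)ˣ) : A n) = MonoidAlgebra.single g 1 := by
    intro g
    simp [hφ, MonoidAlgebra.of_apply]
  have hu : Commute E ((φ (tau (n+2)) : (A n)ˣ) : A n) := by rw [hval]; exact hcomm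
  have hs : Commute E (((φ (tau (n+2)) ^ s : (A n)ˣ) : A n)) := hu.units_zpow_right s
  rw [← map_zpow φ (tau (n+2)) s, hval] at hs
  have hy : MonoidAlgebra.single (tau (n+2) ^ s) (1:ℚ) * MonoidAlgebra.single (tau (n+2) ^ (-s)) (1:ℚ)
      = (1 : A n) := by
    rw [MonoidAlgebra.single_mul_single, one_mul,
      show tau (n+2) ^ s * tau (n+2) ^ (-s) = 1 by group]
    rfl
  rw [hs.symm.eq, mul_assoc, hy, mul_one]

end TC

/-- Conjugating `ẽ⁽ˡ⁾ₖ * τₖ ∈ ℚ[Sₖ]` by any power `τₖˢ` (`s ∈ ℤ`) leaves it fixed. -/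
theorem tau_pow_conj_eulerian_conj_tau (k l : ℕ) (hk : 2 ≤ k) (hl : 1 ≤ l) (s : ℤ) :
    MonoidAlgebra.single (tau k ^ s) (1 : ℚ) *
        (∑ σ : Equiv.Perm (Fin k),
          MonoidAlgebra.single (σ * tau k * σ⁻¹) (aCoeff k l (descents σ + 1))) *
        MonoidAlgebra.single (tau k ^ (-s)) (1 : ℚ) =
      ∑ σ : Equiv.Perm (Fin k),
        MonoidAlgebra.single (σ * tau k * σ⁻¹) (aCoeff k l (descents σ + 1)) := by
  obtain ⟨m, rfl⟩ : ∃ m, k = m + 2 := ⟨k - 2, by omega⟩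
  exact TC.main l s
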